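/- Let (v_k, w_k)_{k≥1} be feasible pairs for the discrete-time dual LP such that ∫_X w_k dλ → λ(X_I), and set X_{I,k} := {x ∈ X : v_k(x) ≥ 0}. Then X_I ⊆ X_{I,k} for every k, lim_{k→∞} λ(X_{I,k} \ X_I) = 0, and λ(⋂_{k≥1} X_{I,k} \ X_I) = 0. -/

import Mathlib

open MeasureTheory Filter Topology
open scoped ENNReal

/-- The maximum controlled invariant set of the discrete-time system
`x_{t+1} = f (x_t, u_t)` with state constraint set `X` and input constraint set `U`. -/
def mciD {n m : ℕ} (X : Set (EuclideanSpace ℝ (Fin n))) (U : Set (EuclideanSpace ℝ (Fin m)))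
    (f : EuclideanSpace ℝ (Fin n) → EuclideanSpace ℝ (Fin m) → EuclideanSpace ℝ (Fin n)) :
    Set (EuclideanSpace ℝ (Fin n)) :=
  {x0 | ∃ (x : ℕ → EuclideanSpace ℝ (Fin n)) (u : ℕ → EuclideanSpace ℝ (Fin m)),
    x 0 = x0 ∧ (∀ t, x (t + 1) = f (x t) (u t)) ∧ (∀ t, x t ∈ X) ∧ (∀ t, u t ∈ U)}

/-- Feasibility of a pair of continuous functions `(v, w)` for the discrete-time dual LP. -/
def DualFeasD {n m : ℕ} (X : Set (EuclideanSpace ℝ (Fin n)))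
    (U : Set (EuclideanSpace ℝ (Fin m)))
    (f : EuclideanSpace ℝ (Fin n) → EuclideanSpace ℝ (Fin m) → EuclideanSpace ℝ (Fin n))
    (α : ℝ) (v w : EuclideanSpace ℝ (Fin n) → ℝ) : Prop :=
  Continuous v ∧ Continuous w ∧
  (∀ x ∈ X, ∀ u ∈ U, α * v (f x u) ≤ v x) ∧
  (∀ x ∈ X, v x + 1 ≤ w x) ∧
  (∀ x ∈ X, 0 ≤ w x)

/-- Trajectory from initial state `x` under input sequence `u`. -/
def trajD {n m : ℕ}
    (f : EuclideanSpace ℝ (Fin n) → EuclideanSpace ℝ (Fin m) → EuclideanSpace ℝ (Fin n))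
    (x : EuclideanSpace ℝ (Fin n)) (u : ℕ → EuclideanSpace ℝ (Fin m)) :
    ℕ → EuclideanSpace ℝ (Fin n)
  | 0 => x
  | t + 1 => f (trajD f x u t) (u t)

lemma trajD_continuous {n m : ℕ}
    {f : EuclideanSpace ℝ (Fin n) → EuclideanSpace ℝ (Fin m) → EuclideanSpace ℝ (Fin n)}
    (hf : Continuous fun p : EuclideanSpace ℝ (Fin n) × EuclideanSpace ℝ (Fin m) => f p.1 p.2)
    (t : ℕ) :
    Continuous (fun p : EuclideanSpace ℝ (Fin n) × (ℕ → EuclideanSpace ℝ (Fin m)) =>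
      trajD f p.1 p.2 t) := by
  induction t with
  | zero => exact continuous_fst
  | succ t ih =>
    exact hf.comp (ih.prodMk ((continuous_apply t).comp continuous_snd))

lemma mciD_eq_image {n m : ℕ}
    (X : Set (EuclideanSpace ℝ (Fin n))) (U : Set (EuclideanSpace ℝ (Fin m)))
    (f : EuclideanSpace ℝ (Fin n) → EuclideanSpace ℝ (Fin m) → EuclideanSpace ℝ (Fin n)) :
    mciD X U f = Prod.fst '' {p : EuclideanSpace ℝ (Fin n) × (ℕ → EuclideanSpace ℝ (Fin m)) |
      (∀ t, trajD f p.1 p.2 t ∈ X) ∧ ∀ t, p.2 t ∈ U} := by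
  ext x0
  constructor
  · rintro ⟨x, u, h0, hrec, hxX, huU⟩
    refine ⟨(x0, u), ⟨?_, huU⟩, rfl⟩
    have key : ∀ t, trajD f x0 u t = x t := by
      intro t
      induction t with
      | zero => exact h0.symm
      | succ t ih => simp [trajD, ih, hrec t]
    intro t; rw [key t]; exact hxX t
  · rintro ⟨⟨x0', u⟩, ⟨hxX, huU⟩, rfl⟩
    exact ⟨trajD f x0' u, u, rfl, fun t => rfl, hxX, huU⟩

lemma mciD_isCompact {n m : ℕ}
    {X : Set (EuclideanSpace ℝ (Fin n))} {U : Set (EuclideanSpace ℝ (Fin m))}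
    (hX : IsCompact X) (hU : IsCompact U)
    {f : EuclideanSpace ℝ (Fin n) → EuclideanSpace ℝ (Fin m) → EuclideanSpace ℝ (Fin n)}
    (hf : Continuous fun p : EuclideanSpace ℝ (Fin n) × EuclideanSpace ℝ (Fin m) => f p.1 p.2) :
    IsCompact (mciD X U f) := by
  rw [mciD_eq_image]
  set K : Set (EuclideanSpace ℝ (Fin n) × (ℕ → EuclideanSpace ℝ (Fin m))) :=
    {p | (∀ t, trajD f p.1 p.2 t ∈ X) ∧ ∀ t, p.2 t ∈ U} with hK
  have hKclosed : IsClosed K := by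
    have h1 : IsClosed {p : EuclideanSpace ℝ (Fin n) × (ℕ → EuclideanSpace ℝ (Fin m)) |
        ∀ t, trajD f p.1 p.2 t ∈ X} := by
      have : {p : EuclideanSpace ℝ (Fin n) × (ℕ → EuclideanSpace ℝ (Fin m)) |
          ∀ t, trajD f p.1 p.2 t ∈ X} = ⋂ t, (fun p => trajD f p.1 p.2 t) ⁻¹' X := by
        ext p; simp
      rw [this]
      exact isClosed_iInter fun t => hX.isClosed.preimage (trajD_continuous hf t)
    have h2 : IsClosed {p : EuclideanSpace ℝ (Fin n) × (ℕ → EuclideanSpace ℝ (Fin m)) |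
        ∀ t, p.2 t ∈ U} := by
      have : {p : EuclideanSpace ℝ (Fin n) × (ℕ → EuclideanSpace ℝ (Fin m)) |
          ∀ t, p.2 t ∈ U} = ⋂ t, (fun p : EuclideanSpace ℝ (Fin n) ×
            (ℕ → EuclideanSpace ℝ (Fin m)) => p.2 t) ⁻¹' U := by
        ext p; simp
      rw [this]
      exact isClosed_iInter fun t =>
        hU.isClosed.preimage ((continuous_apply t).comp continuous_snd)
    exact h1.inter h2
  have hKsub : K ⊆ X ×ˢ Set.pi Set.univ fun _ : ℕ => U := by
    rintro ⟨x, u⟩ ⟨hxX, huU⟩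
    exact ⟨hxX 0, fun t _ => huU t⟩
  have hKcompact : IsCompact K :=
    ((hX.prod (isCompact_univ_pi fun _ => hU)).of_isClosed_subset hKclosed hKsub)
  exact hKcompact.image continuous_fst

/-- Set-wise convergence of the outer approximations `X_{I,k} = {x ∈ X : v_k(x) ≥ 0}`
to the MCI set. -/
theorem outer_approximations_converge_to_MCI {n m : ℕ}
    (X : Set (EuclideanSpace ℝ (Fin n))) (U : Set (EuclideanSpace ℝ (Fin m)))
    (hX : IsCompact X) (hU : IsCompact U)
    (f : EuclideanSpace ℝ (Fin n) → EuclideanSpace ℝ (Fin m) → EuclideanSpace ℝ (Fin n))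
    (hf : Continuous fun p : EuclideanSpace ℝ (Fin n) × EuclideanSpace ℝ (Fin m) => f p.1 p.2)
    (α : ℝ) (hα0 : 0 < α) (hα1 : α < 1)
    (v w : ℕ → EuclideanSpace ℝ (Fin n) → ℝ)
    (hfeas : ∀ k, DualFeasD X U f α (v k) (w k))
    (hconv : Tendsto (fun k => ∫ x in X, w k x ∂volume) atTop
      (𝓝 (volume (mciD X U f)).toReal)) :
    (∀ k, mciD X U f ⊆ {x ∈ X | 0 ≤ v k x}) ∧
    Tendsto (fun k => volume ({x ∈ X | 0 ≤ v k x} \ mciD X U f)) atTop (𝓝 0) ∧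
    volume ((⋂ k, {x ∈ X | 0 ≤ v k x}) \ mciD X U f) = 0 := by
  set I := mciD X U f with hI
  -- Part 1
  have part1 : ∀ k, I ⊆ {x ∈ X | 0 ≤ v k x} := by
    intro k x0 hx0
    obtain ⟨x, u, h0, hrec, hxX, huU⟩ := hx0
    obtain ⟨hvc, hwc, hbell, hvw, hw0⟩ := hfeas k
    have hXne : X.Nonempty := ⟨x 0, hxX 0⟩
    obtain ⟨z, hzX, hzmin⟩ := hX.exists_isMinOn hXne hvc.continuousOn
    set C := v k z with hC
    have hCle : ∀ y ∈ X, C ≤ v k y := fun y hy => hzmin hy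
    -- v k x0 ≥ α^t * v k (x t)
    have key : ∀ t, α ^ t * v k (x t) ≤ v k x0 := by
      intro t
      induction t with
      | zero => simp [h0]
      | succ t ih =>
        refine le_trans ?_ ih
        have h1 : α * v k (x (t + 1)) ≤ v k (x t) := by
          rw [hrec t]; exact hbell (x t) (hxX t) (u t) (huU t)
        calc α ^ (t + 1) * v k (x (t + 1)) = α ^ t * (α * v k (x (t + 1))) := by ring
          _ ≤ α ^ t * v k (x t) := by
              exact mul_le_mul_of_nonneg_left h1 (pow_nonneg hα0.le t)
    have key2 : ∀ t, α ^ t * C ≤ v k x0 := fun t =>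
      le_trans (mul_le_mul_of_nonneg_left (hCle (x t) (hxX t)) (pow_nonneg hα0.le t)) (key t)
    have hlim : Tendsto (fun t : ℕ => α ^ t * C) atTop (𝓝 0) := by
      have := (tendsto_pow_atTop_nhds_zero_of_lt_one hα0.le hα1).mul_const C
      simpa using this
    refine ⟨h0 ▸ hxX 0, le_of_tendsto' hlim key2⟩
  refine ⟨part1, ?_⟩
  -- measurability and finiteness facts
  have hIc : IsCompact I := mciD_isCompact hX hU hf
  have hImeas : MeasurableSet I := hIc.isClosed.measurableSet
  have hXfin : volume X ≠ ∞ := hX.measure_lt_top.ne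
  have hAdef : ∀ k, {x ∈ X | 0 ≤ v k x} = X ∩ {x | 0 ≤ v k x} := fun k => rfl
  have hAclosed : ∀ k, IsClosed {x ∈ X | 0 ≤ v k x} := by
    intro k
    rw [hAdef k]
    exact hX.isClosed.inter (isClosed_le continuous_const (hfeas k).1)
  have hAfin : ∀ k, volume {x ∈ X | 0 ≤ v k x} ≠ ∞ := fun k =>
    (lt_of_le_of_lt (measure_mono fun x hx => hx.1) hX.measure_lt_top).ne
  have hIfin : volume I ≠ ∞ :=
    (lt_of_le_of_lt (measure_mono fun x hx => ((part1 0) hx).1) hX.measure_lt_top).ne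
  -- measure of A_k bounded by the integral of w_k
  have hbound : ∀ k, (volume {x ∈ X | 0 ≤ v k x}).toReal ≤ ∫ x in X, w k x ∂volume := by
    intro k
    obtain ⟨hvc, hwc, hbell, hvw, hw0⟩ := hfeas k
    set A := {x ∈ X | 0 ≤ v k x} with hA
    have hAX : A ⊆ X := fun x hx => hx.1
    have hintX : IntegrableOn (w k) X volume :=
      hwc.continuousOn.integrableOn_compact hX
    have hintA : IntegrableOn (w k) A volume := hintX.mono_set hAX
    have h1 : (volume A).toReal = ∫ _ in A, (1 : ℝ) ∂volume := by
      rw [setIntegral_const, smul_eq_mul, mul_one]; rfl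
    rw [h1]
    have h2 : ∫ _ in A, (1 : ℝ) ∂volume ≤ ∫ x in A, w k x ∂volume := by
      refine setIntegral_mono_on (integrableOn_const ?_) hintA
        (hAclosed k).measurableSet ?_
      · exact (lt_of_le_of_lt (measure_mono hAX) hX.measure_lt_top).ne
      · intro x hx
        have := hvw x hx.1
        linarith [hx.2]
    have h3 : ∫ x in A, w k x ∂volume ≤ ∫ x in X, w k x ∂volume :=
      setIntegral_mono_set hintX
        (ae_restrict_of_forall_mem hX.isClosed.measurableSet hw0)
        (HasSubset.Subset.eventuallyLE hAX)
    linarith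
  -- Part 2
  set a := (volume I).toReal with ha
  set d := fun k => (volume ({x ∈ X | 0 ≤ v k x} \ I)).toReal with hd
  have hdiff : ∀ k, volume ({x ∈ X | 0 ≤ v k x} \ I)
      = volume {x ∈ X | 0 ≤ v k x} - volume I :=
    fun k => measure_diff (part1 k) hImeas.nullMeasurableSet hIfin
  have hdval : ∀ k, d k = (volume {x ∈ X | 0 ≤ v k x}).toReal - a := by
    intro k
    rw [hd]
    simp only
    rw [hdiff k, ENNReal.toReal_sub_of_le (measure_mono (part1 k)) (hAfin k)]
  have hdle : ∀ k, d k ≤ (∫ x in X, w k x ∂volume) - a := by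
    intro k
    rw [hdval k]
    linarith [hbound k]
  have hd0 : ∀ k, 0 ≤ d k := fun k => ENNReal.toReal_nonneg
  have hconv' : Tendsto (fun k => (∫ x in X, w k x ∂volume) - a) atTop (𝓝 0) := by
    have := hconv.sub_const a
    rwa [sub_self] at this
  have hdtend : Tendsto d atTop (𝓝 0) :=
    tendsto_of_tendsto_of_tendsto_of_le_of_le tendsto_const_nhds hconv' hd0 hdle
  have hdfin : ∀ k, volume ({x ∈ X | 0 ≤ v k x} \ I) ≠ ∞ := fun k =>
    (lt_of_le_of_lt (measure_mono Set.diff_subset) (lt_top_iff_ne_top.2 (hAfin k))).ne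
  have hEtend : Tendsto (fun k => volume ({x ∈ X | 0 ≤ v k x} \ I)) atTop (𝓝 0) := by
    have h := ENNReal.tendsto_ofReal hdtend
    rw [ENNReal.ofReal_zero] at h
    refine h.congr fun k => ?_
    rw [hd]
    simp only
    exact ENNReal.ofReal_toReal (hdfin k)
  refine ⟨hEtend, ?_⟩
  -- Part 3
  have hle : ∀ k, volume ((⋂ j, {x ∈ X | 0 ≤ v j x}) \ I)
      ≤ volume ({x ∈ X | 0 ≤ v k x} \ I) := fun k =>
    measure_mono (Set.diff_subset_diff_left (Set.iInter_subset _ k))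
  exact le_antisymm (ge_of_tendsto' hEtend hle) zero_le
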